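/- Suppose (X, Z) is a joint distribution such that X is ε-close to uniform on {0,1}^{a} even conditioned on Z (i.e., (X, Z) ≈_ε (U_a, Z)), and let V be a random variable with range of size at most 2^{b} where b ≤ a − ℓ for some ℓ > 0. Then with probability at least 1 − 2ε' over the fixing of (Z, V) — for appropriate ε' with ε ≤ ε'² — the conditional distribution of X is ε'-close to a distribution with min-entropy at least a − b − log(1/ε') ≥ ℓ − log(1/ε'). -/

import Mathlib

open Finset

private lemma exists_flat_approx {ι : Type*} [Fintype ι]
    (g f : ι → ℝ) (K M ε' : ℝ) (hM : 0 < M)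
    (hf0 : ∀ i, 0 ≤ f i) (hfg : ∀ i, f i ≤ g i)
    (hgM : ∑ i, g i = M)
    (hEε : ∑ i, (g i - f i) ≤ ε' * M)
    (hfK : ∀ i, f i ≤ K * M)
    (hK2 : 2 ≤ K * (Fintype.card ι : ℝ)) :
    ∃ r : ι → ℝ, (∀ i, 0 ≤ r i) ∧ (∑ i, r i = 1) ∧ (∀ i, r i ≤ K) ∧
      (1/2) * ∑ i, |g i - r i * M| ≤ ε' * M := by
  have hcard : 0 < (Fintype.card ι : ℝ) := by
    rcases Nat.eq_zero_or_pos (Fintype.card ι) with h | h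
    · rw [h] at hK2; norm_num at hK2
    · exact_mod_cast h
  set E := ∑ i, (g i - f i) with hE
  have hE0 : 0 ≤ E := Finset.sum_nonneg fun i _ => sub_nonneg.2 (hfg i)
  have hfsum : ∑ i, f i = M - E := by
    rw [hE, Finset.sum_sub_distrib, hgM]; ring
  set C := K * M * (Fintype.card ι : ℝ) - (M - E) with hC
  have hCsum : ∑ i, (K * M - f i) = C := by
    rw [Finset.sum_sub_distrib, Finset.sum_const, hfsum, Finset.card_univ,
      nsmul_eq_mul, hC]; ring
  have hKM2 : 2 * M ≤ K * M * (Fintype.card ι : ℝ) := by nlinarith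
  have hCpos : 0 < C := by rw [hC]; nlinarith
  have hEC : E ≤ C := by rw [hC]; nlinarith
  refine ⟨fun i => f i / M + (E / M) * ((K * M - f i) / C), ?_, ?_, ?_, ?_⟩
  · intro i
    have h1 : 0 ≤ K * M - f i := sub_nonneg.2 (hfK i)
    have h2 : 0 ≤ f i := hf0 i
    have := hM.le
    have := hCpos.le
    positivity
  · rw [Finset.sum_add_distrib, ← Finset.sum_div, hfsum, ← Finset.mul_sum,
      ← Finset.sum_div, hCsum]
    field_simp; ring
  · intro i
    have h1 : (E / M) * ((K * M - f i) / C) ≤ (K * M - f i) / M := by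
      have : (E / M) * ((K * M - f i) / C) = ((K * M - f i) / M) * (E / C) := by
        ring
      rw [this]
      exact mul_le_of_le_one_right (div_nonneg (sub_nonneg.2 (hfK i)) hM.le)
        ((div_le_one hCpos).2 hEC)
    have h2 : f i / M + (K * M - f i) / M = K := by field_simp; ring
    linarith
  · have hri : ∀ i, (f i / M + (E / M) * ((K * M - f i) / C)) * M
        = f i + E * ((K * M - f i) / C) := by
      intro i; field_simp
    have habs : ∀ i ∈ univ,
        |g i - (f i / M + (E / M) * ((K * M - f i) / C)) * M|
          ≤ (g i - f i) + E * ((K * M - f i) / C) := by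
      intro i _
      rw [hri i, show g i - (f i + E * ((K * M - f i) / C))
        = (g i - f i) - E * ((K * M - f i) / C) by ring]
      have h1 : 0 ≤ g i - f i := sub_nonneg.2 (hfg i)
      have h2 : 0 ≤ E * ((K * M - f i) / C) :=
        mul_nonneg hE0 (div_nonneg (sub_nonneg.2 (hfK i)) hCpos.le)
      rw [abs_le]; constructor <;> linarith
    have hsum2 : ∑ i, ((g i - f i) + E * ((K * M - f i) / C)) = 2 * E := by
      rw [Finset.sum_add_distrib, ← hE, ← Finset.mul_sum, ← Finset.sum_div, hCsum]
      field_simp; ring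
    calc (1/2) * ∑ i, |g i - (f i / M + (E / M) * ((K * M - f i) / C)) * M|
        ≤ (1/2) * ∑ i, ((g i - f i) + E * ((K * M - f i) / C)) := by
          have := Finset.sum_le_sum habs
          linarith
      _ = E := by rw [hsum2]; ring
      _ ≤ ε' * M := hEε

set_option maxHeartbeats 1000000 in
open scoped Classical in
/-- suppose `(X, Z, V)` are jointly distributed with `X ∈ {0,1}^a`,
`(X, Z) ≈_ε (U_a, Z)`, `V` ranging over at most `2^b` values with `b ≤ a - ℓ` for some
`ℓ > 0`, and `ε' > 0` satisfies `ε ≤ ε'²`.  Then with probability at least `1 - 2ε'`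
over the fixing of `(Z, V)`, the conditional distribution of `X` is `ε'`-close to a
distribution with min-entropy at least `a - b - log₂(1/ε')`, and moreover
`a - b - log₂(1/ε') ≥ ℓ - log₂(1/ε')`.  (Conditional statements are scaled by
`Pr[(Z,V) = (z,v)]`.) -/
theorem conditioning_on_short_leakage
    {a b : ℕ} {β γ : Type*} [Fintype β] [Fintype γ]
    (p : (Fin a → Bool) × β × γ → ℝ) (hp0 : ∀ w, 0 ≤ p w) (hp1 : ∑ w, p w = 1)
    (hγ : (Fintype.card γ : ℝ) ≤ (2:ℝ) ^ b)
    (ℓ : ℝ) (hℓ : 0 < ℓ) (hb : (b : ℝ) ≤ (a : ℝ) - ℓ)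
    (ε ε' : ℝ) (hε' : 0 < ε') (hεε' : ε ≤ ε' ^ 2)
    (hsd : (1/2) * ∑ w : (Fin a → Bool) × β,
        |(∑ v : γ, p (w.1, w.2, v)) -
          ((2:ℝ)^a)⁻¹ * (∑ x : Fin a → Bool, ∑ v : γ, p (x, w.2, v))| ≤ ε) :
    (∑ zv ∈ univ.filter (fun zv : β × γ => ∃ r : (Fin a → Bool) → ℝ,
        (∀ x, 0 ≤ r x) ∧ (∑ x, r x = 1) ∧
        (∀ x, r x ≤ (2:ℝ) ^ (-((a : ℝ) - (b : ℝ) - Real.logb 2 (1/ε')))) ∧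
        (1/2) * ∑ x : Fin a → Bool,
            |p (x, zv.1, zv.2) - r x * (∑ x' : Fin a → Bool, p (x', zv.1, zv.2))| ≤
          ε' * (∑ x' : Fin a → Bool, p (x', zv.1, zv.2))),
      (∑ x : Fin a → Bool, p (x, zv.1, zv.2)) ≥ 1 - 2 * ε') ∧
    (a : ℝ) - (b : ℝ) - Real.logb 2 (1/ε') ≥ ℓ - Real.logb 2 (1/ε') := by
  refine ⟨?_, by linarith⟩
  rcases le_or_gt (1 - 2 * ε') 0 with htriv | hhalf
  · exact le_trans htriv (Finset.sum_nonneg fun zv _ =>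
      Finset.sum_nonneg fun x _ => hp0 _)
  have hε'half : ε' < 1/2 := by linarith
  have hcard : (Fintype.card (Fin a → Bool) : ℝ) = (2:ℝ)^a := by
    simp [Fintype.card_fun]
  set q : β → ℝ := fun z => ∑ x : Fin a → Bool, ∑ v : γ, p (x, z, v) with hq
  set P : (Fin a → Bool) → β → ℝ := fun x z => ∑ v : γ, p (x, z, v) with hP
  set m : β × γ → ℝ := fun zv => ∑ x : Fin a → Bool, p (x, zv.1, zv.2) with hm
  set u : β → ℝ := fun z => ((2:ℝ)^a)⁻¹ * q z with hu
  set φ : (Fin a → Bool) → β × γ → ℝ := fun x zv =>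
    if P x zv.1 = 0 then 0
    else p (x, zv.1, zv.2) * (min (P x zv.1) (u zv.1) / P x zv.1) with hφ
  set Eta : β × γ → ℝ := fun zv =>
    ∑ x : Fin a → Bool, (p (x, zv.1, zv.2) - φ x zv) with hEta
  -- basic nonnegativity
  have hq0 : ∀ z, 0 ≤ q z := fun z =>
    Finset.sum_nonneg fun x _ => Finset.sum_nonneg fun v _ => hp0 _
  have hP0 : ∀ x z, 0 ≤ P x z := fun x z => Finset.sum_nonneg fun v _ => hp0 _
  have hu0 : ∀ z, 0 ≤ u z := fun z => mul_nonneg (by positivity) (hq0 z)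
  have hm0 : ∀ zv, 0 ≤ m zv := fun zv => Finset.sum_nonneg fun x _ => hp0 _
  have hpP : ∀ x (zv : β × γ), p (x, zv.1, zv.2) ≤ P x zv.1 := by
    intro x zv
    exact Finset.single_le_sum (f := fun v => p (x, zv.1, v))
      (fun v _ => hp0 _) (Finset.mem_univ zv.2)
  have hφ0 : ∀ x (zv : β × γ), 0 ≤ φ x zv := by
    intro x zv
    rw [hφ]; dsimp only
    split
    · exact le_refl 0
    · exact mul_nonneg (hp0 _) (div_nonneg (le_min (hP0 _ _) (hu0 _)) (hP0 _ _))
  have hφp : ∀ x (zv : β × γ), φ x zv ≤ p (x, zv.1, zv.2) := by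
    intro x zv
    rw [hφ]; dsimp only
    split
    · exact hp0 _
    · rename_i hne
      have hPpos : 0 < P x zv.1 := lt_of_le_of_ne (hP0 _ _) (Ne.symm hne)
      exact mul_le_of_le_one_right (hp0 _)
        ((div_le_one hPpos).2 (min_le_left _ _))
  have hφu : ∀ x (zv : β × γ), φ x zv ≤ u zv.1 := by
    intro x zv
    rw [hφ]; dsimp only
    split
    · exact hu0 _
    · rename_i hne
      have hPpos : 0 < P x zv.1 := lt_of_le_of_ne (hP0 _ _) (Ne.symm hne)
      calc p (x, zv.1, zv.2) * (min (P x zv.1) (u zv.1) / P x zv.1)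
          ≤ P x zv.1 * (min (P x zv.1) (u zv.1) / P x zv.1) :=
            mul_le_mul_of_nonneg_right (hpP x zv)
              (div_nonneg (le_min (hP0 _ _) (hu0 _)) (hP0 _ _))
        _ = min (P x zv.1) (u zv.1) := by field_simp
        _ ≤ u zv.1 := min_le_right _ _
  have hφsum_v : ∀ x z, ∑ v : γ, φ x (z, v) = min (P x z) (u z) := by
    intro x z
    by_cases hPz : P x z = 0
    · rw [hPz]
      rw [min_eq_left (hu0 z)]
      apply Finset.sum_eq_zero
      intro v _
      rw [hφ]; dsimp only; rw [if_pos hPz]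
    · have : ∀ v : γ, φ x (z, v) = p (x, z, v) * (min (P x z) (u z) / P x z) := by
        intro v; rw [hφ]; dsimp only; rw [if_neg hPz]
      rw [Finset.sum_congr rfl fun v _ => this v, ← Finset.sum_mul]
      have hPdef : ∑ v : γ, p (x, z, v) = P x z := rfl
      rw [hPdef]; field_simp
  have hEta0 : ∀ zv, 0 ≤ Eta zv := fun zv =>
    Finset.sum_nonneg fun x _ => sub_nonneg.2 (hφp x zv)
  have hφsum_x : ∀ zv : β × γ, ∑ x, φ x zv = m zv - Eta zv := by
    intro zv
    rw [hEta]; dsimp only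
    rw [Finset.sum_sub_distrib]
    show _ = (∑ x : Fin a → Bool, p (x, zv.1, zv.2)) - _
    ring
  -- global sum facts
  have hp1' : ∑ x : Fin a → Bool, ∑ z : β, ∑ v : γ, p (x, z, v) = 1 := by
    rw [Fintype.sum_prod_type] at hp1
    simp only [Fintype.sum_prod_type] at hp1
    exact hp1
  have hqsum : ∑ z, q z = 1 := by
    rw [hq]; dsimp only
    rw [Finset.sum_comm]
    exact hp1'
  have hsum_m : ∑ zv : β × γ, m zv = 1 := by
    rw [hm]; dsimp only
    rw [Finset.sum_comm]
    simp only [Fintype.sum_prod_type]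
    exact hp1'
  have hp1'' : ∑ x : Fin a → Bool, ∑ z : β, P x z = 1 := hp1'
  have hsd' : (1/2) * ∑ x : Fin a → Bool, ∑ z : β, |P x z - u z| ≤ ε := by
    rw [Fintype.sum_prod_type] at hsd
    exact hsd
  have husum : ∑ x : Fin a → Bool, ∑ z, u z = 1 := by
    rw [Finset.sum_comm]
    have h1 : ∀ z, ∑ _x : Fin a → Bool, u z = (2:ℝ)^a * u z := by
      intro z
      rw [Finset.sum_const, Finset.card_univ, nsmul_eq_mul, hcard]
    rw [Finset.sum_congr rfl fun z _ => h1 z]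
    have h2 : ∀ z, (2:ℝ)^a * u z = q z := by
      intro z; rw [hu]; dsimp only; field_simp
    rw [Finset.sum_congr rfl fun z _ => h2 z]
    exact hqsum
  have hdsum : ∑ x : Fin a → Bool, ∑ z, (P x z - u z) = 0 := by
    have h1 : ∀ x : Fin a → Bool, ∑ z, (P x z - u z) = (∑ z, P x z) - ∑ z, u z :=
      fun x => Finset.sum_sub_distrib _ _
    rw [Finset.sum_congr rfl fun x _ => h1 x, Finset.sum_sub_distrib, hp1'', husum]
    norm_num
  have hmax_eq : ∀ d : ℝ, max d 0 = (|d| + d)/2 := by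
    intro d
    rcases le_total 0 d with h | h
    · rw [max_eq_left h, abs_of_nonneg h]; ring
    · rw [max_eq_right h, abs_of_nonpos h]; ring
  have hminmax : ∀ A B : ℝ, A - min A B = max (A - B) 0 := by
    intro A B
    rcases le_total A B with h | h
    · rw [min_eq_left h, max_eq_right (by linarith : A - B ≤ 0)]; ring
    · rw [min_eq_right h, max_eq_left (by linarith : (0:ℝ) ≤ A - B)]
  have hposle : ∑ x : Fin a → Bool, ∑ z, max (P x z - u z) 0 ≤ ε := by
    have h1 : ∑ x : Fin a → Bool, ∑ z, max (P x z - u z) 0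
        = (1/2) * (∑ x : Fin a → Bool, ∑ z, |P x z - u z|)
          + (1/2) * (∑ x : Fin a → Bool, ∑ z, (P x z - u z)) := by
      rw [Finset.mul_sum, Finset.mul_sum, ← Finset.sum_add_distrib]
      refine Finset.sum_congr rfl fun x _ => ?_
      rw [Finset.mul_sum, Finset.mul_sum, ← Finset.sum_add_distrib]
      refine Finset.sum_congr rfl fun z _ => ?_
      rw [hmax_eq]; ring
    rw [h1, hdsum]
    linarith [hsd']
  have hEsum : ∑ zv : β × γ, Eta zv ≤ ε := by
    have h1 : ∑ zv : β × γ, Eta zv = ∑ x : Fin a → Bool, ∑ z, max (P x z - u z) 0 := by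
      rw [hEta]; dsimp only
      rw [Finset.sum_comm]
      simp only [Fintype.sum_prod_type]
      refine Finset.sum_congr rfl fun x _ => Finset.sum_congr rfl fun z _ => ?_
      rw [Finset.sum_sub_distrib]
      rw [hφsum_v]
      show P x z - min (P x z) (u z) = _
      exact hminmax _ _
    rw [h1]; exact hposle
  -- the flatness threshold
  set Kr : ℝ := (2:ℝ)^b * ((2:ℝ)^a)⁻¹ * ε'⁻¹ with hKr
  have hKreq : (2:ℝ) ^ (-((a:ℝ) - (b:ℝ) - Real.logb 2 (1/ε'))) = Kr := by
    have hlogb : (2:ℝ) ^ (Real.logb 2 (1/ε')) = 1/ε' :=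
      Real.rpow_logb (by norm_num) (by norm_num) (by positivity)
    have he : -((a:ℝ) - (b:ℝ) - Real.logb 2 (1/ε'))
        = Real.logb 2 (1/ε') + ((b:ℝ) + (-(a:ℝ))) := by ring
    rw [he, Real.rpow_add (by norm_num : (0:ℝ) < 2),
      Real.rpow_add (by norm_num : (0:ℝ) < 2), hlogb,
      Real.rpow_natCast, Real.rpow_neg (by norm_num : (0:ℝ) ≤ 2), Real.rpow_natCast, hKr]
    rw [one_div]; ring
  have hKrpos : 0 < Kr := by rw [hKr]; positivity
  have h2b1 : (1:ℝ) ≤ (2:ℝ)^b := one_le_pow₀ (by norm_num)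
  have hεinv2 : 2 ≤ ε'⁻¹ := by
    rw [show (2:ℝ) = (2⁻¹)⁻¹ by norm_num]
    exact inv_anti₀ hε' (by linarith)
  -- the good predicate
  set good : β × γ → Prop := fun zv =>
    Eta zv ≤ ε' * m zv ∧ ∀ x, φ x zv ≤ Kr * m zv with hgood
  -- good points satisfy the goal predicate
  have hgood_pred : ∀ zv : β × γ, good zv →
      ∃ r : (Fin a → Bool) → ℝ,
        (∀ x, 0 ≤ r x) ∧ (∑ x, r x = 1) ∧
        (∀ x, r x ≤ (2:ℝ) ^ (-((a : ℝ) - (b : ℝ) - Real.logb 2 (1/ε')))) ∧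
        (1/2) * ∑ x : Fin a → Bool,
            |p (x, zv.1, zv.2) - r x * (∑ x' : Fin a → Bool, p (x', zv.1, zv.2))| ≤
          ε' * (∑ x' : Fin a → Bool, p (x', zv.1, zv.2)) := by
    intro zv hgd
    have hgd' : Eta zv ≤ ε' * m zv ∧ ∀ x, φ x zv ≤ Kr * m zv := hgd
    have hmzv : (∑ x' : Fin a → Bool, p (x', zv.1, zv.2)) = m zv := rfl
    by_cases hmz : m zv = 0
    · -- zero mass: use the uniform distribution
      have hall : ∀ x : Fin a → Bool, p (x, zv.1, zv.2) = 0 := by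
        have h0 : (∑ x : Fin a → Bool, p (x, zv.1, zv.2)) = 0 := hmz
        intro x
        exact (Finset.sum_eq_zero_iff_of_nonneg
          (fun y _ => hp0 (y, zv.1, zv.2))).1 h0 x (Finset.mem_univ x)
      refine ⟨fun _ => ((2:ℝ)^a)⁻¹, fun _ => by positivity, ?_, ?_, ?_⟩
      · rw [Finset.sum_const, Finset.card_univ, nsmul_eq_mul, hcard]
        field_simp
      · intro x
        rw [hKreq, hKr]
        have h1 : (1:ℝ) ≤ (2:ℝ)^b * ε'⁻¹ := by nlinarith
        calc ((2:ℝ)^a)⁻¹ = ((2:ℝ)^a)⁻¹ * 1 := by ring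
          _ ≤ ((2:ℝ)^a)⁻¹ * ((2:ℝ)^b * ε'⁻¹) :=
              mul_le_mul_of_nonneg_left h1 (by positivity)
          _ = (2:ℝ)^b * ((2:ℝ)^a)⁻¹ * ε'⁻¹ := by ring
      · rw [hmzv, hmz]
        simp only [mul_zero, sub_zero]
        have h2 : ∑ x : Fin a → Bool, |p (x, zv.1, zv.2)| = 0 := by
          apply Finset.sum_eq_zero
          intro x _
          rw [hall x, abs_zero]
        rw [h2]
        norm_num
    · -- positive mass: use the truncation lemma
      have hmpos : 0 < m zv := lt_of_le_of_ne (hm0 zv) (Ne.symm hmz)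
      have hK2 : 2 ≤ Kr * (Fintype.card (Fin a → Bool) : ℝ) := by
        rw [hcard, hKr]
        have h1 : (2:ℝ)^b * ((2:ℝ)^a)⁻¹ * ε'⁻¹ * (2:ℝ)^a = (2:ℝ)^b * ε'⁻¹ := by
          field_simp
        rw [h1]
        nlinarith
      obtain ⟨r, hr0, hr1, hrK, hrsd⟩ := exists_flat_approx
        (fun x => p (x, zv.1, zv.2)) (fun x => φ x zv) Kr (m zv) ε' hmpos
        (fun x => hφ0 x zv) (fun x => hφp x zv) rfl hgd'.1 (fun x => hgd'.2 x) hK2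
      exact ⟨r, hr0, hr1, fun x => by rw [hKreq]; exact hrK x, hrsd⟩
  -- pointwise bound on bad mass
  have hh0 : ∀ zv : β × γ, (0:ℝ) ≤
      (if ε' * m zv < Eta zv then Eta zv / ε' else 0) +
      (if ∃ x, Kr * m zv < φ x zv then ε' * ((2:ℝ)^b)⁻¹ * q zv.1 else 0) := by
    intro zv
    have := hEta0 zv
    have := hq0 zv.1
    apply add_nonneg <;> split_ifs <;> positivity
  have hbad_le : ∀ zv : β × γ, ¬ good zv → m zv ≤
      (if ε' * m zv < Eta zv then Eta zv / ε' else 0) +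
      (if ∃ x, Kr * m zv < φ x zv then ε' * ((2:ℝ)^b)⁻¹ * q zv.1 else 0) := by
    intro zv hbad
    have hbad' : ¬ (Eta zv ≤ ε' * m zv ∧ ∀ x, φ x zv ≤ Kr * m zv) := hbad
    rw [not_and_or] at hbad'
    push_neg at hbad'
    rcases hbad' with h1 | h2
    · have hterm1 : m zv ≤ Eta zv / ε' := by
        rw [le_div_iff₀ hε']
        nlinarith
      rw [if_pos h1]
      have h2' : (0:ℝ) ≤
          (if ∃ x, Kr * m zv < φ x zv then ε' * ((2:ℝ)^b)⁻¹ * q zv.1 else 0) := by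
        have := hq0 zv.1
        split_ifs <;> positivity
      linarith
    · obtain ⟨x, hx⟩ := h2
      have h3 : Kr * m zv < u zv.1 := lt_of_lt_of_le hx (hφu x zv)
      have h4 : m zv ≤ u zv.1 / Kr := by
        rw [le_div_iff₀ hKrpos]
        nlinarith
      have h5 : u zv.1 / Kr = ε' * ((2:ℝ)^b)⁻¹ * q zv.1 := by
        rw [hu, hKr]; dsimp only
        field_simp
      rw [if_pos (show (∃ x, Kr * m zv < φ x zv) from ⟨x, hx⟩)]
      have h6 : (0:ℝ) ≤ (if ε' * m zv < Eta zv then Eta zv / ε' else 0) := by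
        have := hEta0 zv
        split_ifs <;> positivity
      linarith
  -- the two global bounds
  have hS1 : ∑ zv : β × γ, (if ε' * m zv < Eta zv then Eta zv / ε' else 0) ≤ ε' := by
    have h1 : ∀ zv ∈ (univ : Finset (β × γ)),
        (if ε' * m zv < Eta zv then Eta zv / ε' else 0) ≤ Eta zv / ε' := by
      intro zv _
      have := hEta0 zv
      split_ifs
      · exact le_refl _
      · positivity
    calc ∑ zv : β × γ, (if ε' * m zv < Eta zv then Eta zv / ε' else 0)
        ≤ ∑ zv : β × γ, Eta zv / ε' := Finset.sum_le_sum h1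
      _ = (∑ zv : β × γ, Eta zv) / ε' := by rw [Finset.sum_div]
      _ ≤ ε' := by
          rw [div_le_iff₀ hε']
          nlinarith [hEsum]
  have hS2 : ∑ zv : β × γ,
      (if ∃ x, Kr * m zv < φ x zv then ε' * ((2:ℝ)^b)⁻¹ * q zv.1 else 0) ≤ ε' := by
    have h1 : ∀ zv ∈ (univ : Finset (β × γ)),
        (if ∃ x, Kr * m zv < φ x zv then ε' * ((2:ℝ)^b)⁻¹ * q zv.1 else 0)
          ≤ ε' * ((2:ℝ)^b)⁻¹ * q zv.1 := by
      intro zv _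
      have := hq0 zv.1
      split_ifs
      · exact le_refl _
      · positivity
    have hb2 : (0:ℝ) < (2:ℝ)^b := by positivity
    have hcγ : (Fintype.card γ : ℝ) * ((2:ℝ)^b)⁻¹ ≤ 1 := by
      rw [← div_eq_mul_inv]
      exact (div_le_one hb2).2 hγ
    calc ∑ zv : β × γ,
        (if ∃ x, Kr * m zv < φ x zv then ε' * ((2:ℝ)^b)⁻¹ * q zv.1 else 0)
        ≤ ∑ zv : β × γ, ε' * ((2:ℝ)^b)⁻¹ * q zv.1 := Finset.sum_le_sum h1
      _ = ∑ z : β, ∑ _v : γ, ε' * ((2:ℝ)^b)⁻¹ * q z := by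
          rw [Fintype.sum_prod_type]
      _ = ∑ z : β, (Fintype.card γ : ℝ) * (ε' * ((2:ℝ)^b)⁻¹) * q z := by
          refine Finset.sum_congr rfl fun z _ => ?_
          rw [Finset.sum_const, Finset.card_univ, nsmul_eq_mul]
          try ring
      _ = (Fintype.card γ : ℝ) * (ε' * ((2:ℝ)^b)⁻¹) * ∑ z, q z := by
          rw [← Finset.mul_sum]
      _ ≤ ε' := by
          rw [hqsum, mul_one]
          nlinarith [hq0, hε'.le, hcγ]
  -- put everything together
  have hfilter : 1 - 2 * ε' ≤ ∑ zv ∈ univ.filter good, m zv := by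
    have h1 := Finset.sum_filter_add_sum_filter_not (univ : Finset (β × γ)) good m
    have h2 : ∑ zv ∈ univ.filter (fun zv => ¬ good zv), m zv ≤ 2 * ε' := by
      calc ∑ zv ∈ univ.filter (fun zv => ¬ good zv), m zv
          ≤ ∑ zv ∈ univ.filter (fun zv => ¬ good zv),
              ((if ε' * m zv < Eta zv then Eta zv / ε' else 0) +
               (if ∃ x, Kr * m zv < φ x zv then ε' * ((2:ℝ)^b)⁻¹ * q zv.1 else 0)) :=
            Finset.sum_le_sum fun zv hzv => hbad_le zv (Finset.mem_filter.1 hzv).2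
        _ ≤ ∑ zv : β × γ,
              ((if ε' * m zv < Eta zv then Eta zv / ε' else 0) +
               (if ∃ x, Kr * m zv < φ x zv then ε' * ((2:ℝ)^b)⁻¹ * q zv.1 else 0)) :=
            Finset.sum_le_sum_of_subset_of_nonneg (Finset.filter_subset _ _)
              (fun zv _ _ => hh0 zv)
        _ = (∑ zv : β × γ, (if ε' * m zv < Eta zv then Eta zv / ε' else 0)) +
            ∑ zv : β × γ,
              (if ∃ x, Kr * m zv < φ x zv then ε' * ((2:ℝ)^b)⁻¹ * q zv.1 else 0) :=
            Finset.sum_add_distrib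
        _ ≤ ε' + ε' := add_le_add hS1 hS2
        _ = 2 * ε' := by ring
    have h3 : ∑ zv ∈ (univ : Finset (β × γ)), m zv = 1 := hsum_m
    linarith
  refine le_trans hfilter ?_
  apply Finset.sum_le_sum_of_subset_of_nonneg
  · intro zv hzv
    rw [Finset.mem_filter] at hzv ⊢
    exact ⟨hzv.1, hgood_pred zv hzv.2⟩
  · intro zv _ _
    exact hm0 zv
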